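/- If y₁, y₂ ∈ ℝⁿ satisfy y₁ᵀy₂ ≥ 0, then there exist positive semi-definite symmetric n×n matrices W₁, W₂ such that W₁ + W₂ = I, y₁ = W₁(y₁ + y₂), and y₂ = W₂(y₁ + y₂). -/

import Mathlib

open Matrix

lemma vecMulVec_mulVec' {n : ℕ} (u v x : Fin n → ℝ) :
    vecMulVec u v *ᵥ x = (v ⬝ᵥ x) • u := by
  ext i
  simp [mulVec, vecMulVec_apply, dotProduct, Finset.mul_sum, Finset.sum_mul, mul_assoc, mul_comm,
    mul_left_comm]

theorem stmt0 (n : ℕ) (y₁ y₂ : Fin n → ℝ) (h : 0 ≤ y₁ ⬝ᵥ y₂) :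
    ∃ W₁ W₂ : Matrix (Fin n) (Fin n) ℝ,
      W₁.PosSemidef ∧ W₂.PosSemidef ∧ W₁ + W₂ = 1 ∧
      W₁ *ᵥ (y₁ + y₂) = y₁ ∧ W₂ *ᵥ (y₁ + y₂) = y₂ := by
  set d : ℝ := y₁ ⬝ᵥ (y₁ + y₂) with hd
  have hy11 : (0:ℝ) ≤ y₁ ⬝ᵥ y₁ := by
    simpa using dotProduct_self_star_nonneg y₁
  have hdd : d = y₁ ⬝ᵥ y₁ + y₁ ⬝ᵥ y₂ := by rw [hd, dotProduct_add]
  have hdnn : 0 ≤ d := by rw [hdd]; positivity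
  rcases eq_or_lt_of_le hdnn with h0 | hpos
  · have h11 : y₁ ⬝ᵥ y₁ = 0 := by linarith [hdd ▸ h0.symm]
    have hy0 : y₁ = 0 := dotProduct_self_eq_zero.mp h11
    refine ⟨0, 1, Matrix.PosSemidef.zero, Matrix.PosSemidef.one, by simp, ?_, ?_⟩
    · simp [hy0]
    · simp [hy0]
  · have hW1herm : (d⁻¹ • vecMulVec y₁ y₁).IsHermitian := by
      unfold Matrix.IsHermitian
      ext i j
      simp [vecMulVec_apply, mul_comm]
    have hd1 : y₁ ⬝ᵥ y₁ ≤ d := by rw [hdd]; linarith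
    have key : ∀ x : Fin n → ℝ, (y₁ ⬝ᵥ x) * (y₁ ⬝ᵥ x) ≤ d * (x ⬝ᵥ x) := by
      intro x
      have cs : (y₁ ⬝ᵥ x) ^ 2 ≤ (y₁ ⬝ᵥ y₁) * (x ⬝ᵥ x) := by
        have := Finset.sum_mul_sq_le_sq_mul_sq Finset.univ y₁ x
        simpa [dotProduct, sq] using this
      have hxx : (0:ℝ) ≤ x ⬝ᵥ x := by simpa using dotProduct_self_star_nonneg x
      nlinarith
    refine ⟨d⁻¹ • vecMulVec y₁ y₁, 1 - d⁻¹ • vecMulVec y₁ y₁, Matrix.PosSemidef.of_dotProduct_mulVec_nonneg hW1herm ?_,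
      Matrix.PosSemidef.of_dotProduct_mulVec_nonneg (Matrix.isHermitian_one.sub hW1herm) ?_, by abel, ?_, ?_⟩
    · intro x
      simp only [star_trivial, smul_mulVec, vecMulVec_mulVec', dotProduct_smul,
        smul_eq_mul]
      have : y₁ ⬝ᵥ x = x ⬝ᵥ y₁ := dotProduct_comm y₁ x
      rw [this]
      exact mul_nonneg (inv_nonneg.mpr hdnn) (mul_self_nonneg _)
    · intro x
      simp only [star_trivial, sub_mulVec, one_mulVec, dotProduct_sub, smul_mulVec,
        vecMulVec_mulVec', dotProduct_smul, smul_eq_mul, sub_nonneg]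
      have hk := key x
      have : d⁻¹ * ((y₁ ⬝ᵥ x) * (x ⬝ᵥ y₁)) ≤ d⁻¹ * (d * (x ⬝ᵥ x)) := by
        apply mul_le_mul_of_nonneg_left _ (inv_nonneg.mpr hdnn)
        rw [dotProduct_comm x y₁]; exact hk
      calc d⁻¹ * (y₁ ⬝ᵥ x * (x ⬝ᵥ y₁)) ≤ d⁻¹ * (d * (x ⬝ᵥ x)) := this
        _ = x ⬝ᵥ x := by field_simp
    · rw [smul_mulVec, vecMulVec_mulVec', ← hd, smul_smul, inv_mul_cancel₀ hpos.ne',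
        one_smul]
    · rw [sub_mulVec, one_mulVec, smul_mulVec, vecMulVec_mulVec', ← hd, smul_smul,
        inv_mul_cancel₀ hpos.ne', one_smul]
      ext i; simp
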